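/- (Shared equilibria coincide with Nash equilibria of the underlying game.) Consider n players each choosing a policy, with utilities V_i(π_1, …, π_n) ∈ ℝ. Identify a shared policy with the tuple (π(·|1), …, π(·|n)) = (π_1, …, π_n). Define V̂(π, η) := (1/n) Σ_{i=1}^n V_i with player i using π_i := π(·|i) and all players j ≠ i using η(·|j). Then (π_1*, …, π_n*) is a Nash equilibrium of the underlying game (i.e., V_i(η, π*_{−i}) ≤ V_i(π*_i, π*_{−i}) for all i and all η) if and only if the corresponding shared policy π* is a shared equilibrium, i.e., V̂(π', π*) ≤ V̂(π*, π*) for every shared policy π'. -/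
import Mathlib


open scoped BigOperators

/-- Shared equilibria coincide with Nash equilibria of the underlying game.
A shared policy is identified with the tuple π : Fin n → P of per-type
policies; V̂(π', π) = (1/n) ∑ᵢ (utility of player i playing π'(i) while every
j ≠ i plays π(j)). Then π* is a Nash equilibrium of the underlying game iff
π* is a shared equilibrium, i.e. no shared-policy deviation improves V̂ from
the symmetric point (π*, π*). -/
theorem stmt_17 {n : ℕ} (hn : 0 < n) {P : Type*}
    (V : Fin n → (Fin n → P) → ℝ)
    (Vhat : (Fin n → P) → (Fin n → P) → ℝ)
    (hVhat : ∀ π η : Fin n → P,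
      Vhat π η = (1 / (n : ℝ)) * ∑ i : Fin n, V i (Function.update η i (π i)))
    (πstar : Fin n → P) :
    (∀ i : Fin n, ∀ η : P, V i (Function.update πstar i η) ≤ V i πstar) ↔
      (∀ π' : Fin n → P, Vhat π' πstar ≤ Vhat πstar πstar) := by
  have hnpos : (0 : ℝ) < 1 / (n : ℝ) := by positivity
  have hself : ∀ i : Fin n, Function.update πstar i (πstar i) = πstar := fun i =>
    Function.update_eq_self i πstar
  constructor
  · intro h π'
    rw [hVhat, hVhat]
    apply mul_le_mul_of_nonneg_left _ hnpos.le
    apply Finset.sum_le_sum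
    intro i _
    rw [hself i]
    exact h i (π' i)
  · intro h i η
    have key := h (Function.update πstar i η)
    rw [hVhat, hVhat] at key
    have hsum := le_of_mul_le_mul_left key hnpos
    have heq : ∀ j : Fin n,
        V j (Function.update πstar j (Function.update πstar i η j)) =
          if j = i then V i (Function.update πstar i η) else V j πstar := by
      intro j
      by_cases hji : j = i
      · subst hji; simp
      · rw [if_neg hji, Function.update_of_ne hji, hself j]
    have heq2 : ∀ j : Fin n, V j (Function.update πstar j (πstar j)) =
        if j = i then V i πstar else V j πstar := by
      intro j; rw [hself j]; split <;> simp_all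
    rw [Finset.sum_congr rfl (fun j _ => heq j),
        Finset.sum_congr rfl (fun j _ => heq2 j)] at hsum
    have hsplit : ∀ (c : ℝ), ∑ j : Fin n, (if j = i then c else V j πstar) =
        c + ∑ j ∈ Finset.univ.erase i, V j πstar := by
      intro c
      rw [← Finset.add_sum_erase _ _ (Finset.mem_univ i)]
      simp only [if_pos rfl]
      congr 1
      exact Finset.sum_congr rfl fun j hj => if_neg (Finset.mem_erase.mp hj).1
    rw [hsplit, hsplit] at hsum
    linarith
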